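/- Let n = 2k with k ≥ 1. Let c be an invertible symmetric n×n real matrix, a an arbitrary n×n real matrix, x a symmetric n×n real matrix, and g ∈ GL(n,ℝ) with det g > 0. Put (c', a') = Ad*(x,g)(c,a) = ((gᵀ)⁻¹ c g⁻¹, g a g⁻¹ + x (gᵀ)⁻¹ c g⁻¹). Then det( ½ ( a' c'⁻¹ − (a' c'⁻¹)ᵀ ) ) · det(c') = det( ½ ( a c⁻¹ − (a c⁻¹)ᵀ ) ) · det(c), i.e. the function π(a c⁻¹)² det(c) (the square of the Pfaffian invariant π(a c⁻¹) det(c)^{1/2}) is invariant under the coadjoint action. -/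

import Mathlib

open Matrix

theorem pfaffian_square_invariant (k : ℕ) (hk : 1 ≤ k)
    (c a x g : Matrix (Fin (2 * k)) (Fin (2 * k)) ℝ)
    (hc : c.IsSymm) (hcu : IsUnit c.det) (hx : x.IsSymm) (hg : 0 < g.det) :
    ((1 / 2 : ℝ) •
        ((g * a * g⁻¹ + x * ((gᵀ)⁻¹ * c * g⁻¹)) * ((gᵀ)⁻¹ * c * g⁻¹)⁻¹ -
          ((g * a * g⁻¹ + x * ((gᵀ)⁻¹ * c * g⁻¹)) * ((gᵀ)⁻¹ * c * g⁻¹)⁻¹)ᵀ)).det *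
      ((gᵀ)⁻¹ * c * g⁻¹).det =
    ((1 / 2 : ℝ) • (a * c⁻¹ - (a * c⁻¹)ᵀ)).det * c.det := by
  have hgu : IsUnit g.det := (ne_of_gt hg).isUnit
  have hgtu : IsUnit gᵀ.det := by simpa using hgu
  have hinv : ((gᵀ)⁻¹ * c * g⁻¹)⁻¹ = g * c⁻¹ * gᵀ := by
    apply inv_eq_right_inv
    calc (gᵀ)⁻¹ * c * g⁻¹ * (g * c⁻¹ * gᵀ)
        = (gᵀ)⁻¹ * (c * (g⁻¹ * (g * (c⁻¹ * gᵀ)))) := by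
          simp only [Matrix.mul_assoc]
      _ = (gᵀ)⁻¹ * gᵀ := by
          rw [Matrix.nonsing_inv_mul_cancel_left _ _ hgu,
            Matrix.mul_nonsing_inv_cancel_left _ _ hcu]
      _ = 1 := Matrix.nonsing_inv_mul _ hgtu
  have key : (g * a * g⁻¹ + x * ((gᵀ)⁻¹ * c * g⁻¹)) * ((gᵀ)⁻¹ * c * g⁻¹)⁻¹
      = g * (a * c⁻¹) * gᵀ + x := by
    rw [hinv, add_mul]
    congr 1
    · calc g * a * g⁻¹ * (g * c⁻¹ * gᵀ)
          = g * (a * (g⁻¹ * (g * (c⁻¹ * gᵀ)))) := by simp only [Matrix.mul_assoc]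
        _ = g * (a * (c⁻¹ * gᵀ)) := by rw [Matrix.nonsing_inv_mul_cancel_left _ _ hgu]
        _ = g * (a * c⁻¹) * gᵀ := by simp only [Matrix.mul_assoc]
    · calc x * ((gᵀ)⁻¹ * c * g⁻¹) * (g * c⁻¹ * gᵀ)
          = x * ((gᵀ)⁻¹ * (c * (g⁻¹ * (g * (c⁻¹ * gᵀ))))) := by simp only [Matrix.mul_assoc]
        _ = x * ((gᵀ)⁻¹ * gᵀ) := by
            rw [Matrix.nonsing_inv_mul_cancel_left _ _ hgu,
              Matrix.mul_nonsing_inv_cancel_left _ _ hcu]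
        _ = x := by rw [Matrix.nonsing_inv_mul _ hgtu, mul_one]
  rw [key]
  have hanti : (1 / 2 : ℝ) • ((g * (a * c⁻¹) * gᵀ + x) - (g * (a * c⁻¹) * gᵀ + x)ᵀ)
      = g * ((1 / 2 : ℝ) • (a * c⁻¹ - (a * c⁻¹)ᵀ)) * gᵀ := by
    rw [transpose_add, transpose_mul, transpose_mul, transpose_transpose, hx.eq,
      Matrix.mul_smul, Matrix.smul_mul]
    congr 1
    rw [Matrix.mul_sub, Matrix.sub_mul]
    simp only [Matrix.mul_assoc]
    abel
  rw [hanti]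
  rw [Matrix.det_mul, Matrix.det_mul, Matrix.det_mul, Matrix.det_mul,
    Matrix.det_transpose, Matrix.det_nonsing_inv, Matrix.det_transpose,
    Matrix.det_nonsing_inv]
  have hne : g.det ≠ 0 := ne_of_gt hg
  simp only [Ring.inverse_eq_inv']
  field_simp
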